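/- With μ(β,ρ,η) the unique negative solution of ρ = I(β,μ) + |η|²/μ², the 'gauge symmetry breaking' quasi-average limit holds: if η = |η|e^{iφ} with φ fixed and |η| → 0⁺, then η/μ(β,ρ,η) → -e^{iφ}√(ρ - ρ_c(β)) up to sign; in particular |η/μ(β,ρ,η)| → √(ρ - ρ_c(β)) whenever ρ > ρ_c(β). -/

import Mathlib

open Filter Topology

/-- Gauge symmetry breaking via quasi-averages: with `μ(η)` the unique negative
solution of `ρ = I(μ) + |η|²/μ²`, along the ray `η = t e^{iφ}`, `t → 0⁺`, one has
`η/μ(η) → -e^{iφ}√(ρ-ρ_c)`; in particular `|η/μ(η)| → √(ρ-ρ_c)`. -/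
theorem gauge_symmetry_breaking_quasi_average
    (β ρ ρc : ℝ) (I : ℝ → ℝ)
    (hIc : ContinuousOn I (Set.Iio 0)) (hImono : StrictMonoOn I (Set.Iio 0))
    (hI0 : Tendsto I (𝓝[<] 0) (𝓝 ρc)) (hIbot : Tendsto I atBot (𝓝 0))
    (hρ : ρc < ρ) (φ : ℝ) (μsol : ℂ → ℝ)
    (hsol : ∀ η : ℂ, η ≠ 0 → μsol η < 0 ∧ ρ = I (μsol η) + ‖η‖ ^ 2 / (μsol η) ^ 2) :
    Tendsto (fun t : ℝ =>
        ((t : ℂ) * Complex.exp (Complex.I * (φ:ℂ))) /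
          ((μsol ((t : ℂ) * Complex.exp (Complex.I * (φ:ℂ))) : ℝ) : ℂ))
      (𝓝[>] (0:ℝ))
      (𝓝 (-(Real.sqrt (ρ - ρc) : ℂ) * Complex.exp (Complex.I * (φ:ℂ)))) ∧
    Tendsto (fun η : ℂ => ‖η‖ / |μsol η|) (𝓝[≠] (0:ℂ)) (𝓝 (Real.sqrt (ρ - ρc))) := by
  have hpos : (0:ℝ) < ρ - ρc := by linarith
  have hsq : (0:ℝ) < Real.sqrt (ρ - ρc) := Real.sqrt_pos.mpr hpos
  -- I μ < ρc for all μ < 0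
  have hIlt : ∀ μ : ℝ, μ < 0 → I μ < ρc := by
    intro μ hμ
    have hμ2 : μ / 2 < 0 := by linarith
    have h1 : I μ < I (μ / 2) := hImono hμ hμ2 (by linarith)
    have h2 : I (μ / 2) ≤ ρc := by
      refine ge_of_tendsto hI0 ?_
      filter_upwards [self_mem_nhdsWithin,
        eventually_nhdsWithin_of_eventually_nhds (eventually_gt_nhds hμ2)] with x hx1 hx2
      exact (hImono hμ2 hx1 hx2).le
    linarith
  -- bound on |μsol η|
  have hbound : ∀ η : ℂ, η ≠ 0 → |μsol η| ≤ ‖η‖ / Real.sqrt (ρ - ρc) := by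
    intro η hη
    obtain ⟨hneg, heq⟩ := hsol η hη
    have hμ2 : (0:ℝ) < (μsol η) ^ 2 := by
      rw [← sq_abs]; exact pow_pos (abs_pos.mpr hneg.ne) 2
    have h1 : ρ - ρc ≤ ‖η‖ ^ 2 / (μsol η) ^ 2 := by
      have := hIlt (μsol η) hneg; linarith
    have h2 : (ρ - ρc) * (μsol η) ^ 2 ≤ ‖η‖ ^ 2 := (le_div_iff₀ hμ2).mp h1
    have h3 : Real.sqrt ((ρ - ρc) * (μsol η) ^ 2) ≤ Real.sqrt (‖η‖ ^ 2) :=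
      Real.sqrt_le_sqrt h2
    rw [Real.sqrt_mul hpos.le, Real.sqrt_sq_eq_abs, Real.sqrt_sq (norm_nonneg _)] at h3
    rw [le_div_iff₀ hsq]
    linarith [h3]
  -- μsol → 0 within Iio 0
  have hμ0 : Tendsto μsol (𝓝[≠] (0:ℂ)) (𝓝[<] 0) := by
    apply tendsto_nhdsWithin_of_tendsto_nhds_of_eventually_within
    · have hg : Tendsto (fun η : ℂ => ‖η‖ / Real.sqrt (ρ - ρc)) (𝓝[≠] (0:ℂ)) (𝓝 0) := by
        have := (tendsto_norm_zero.mono_left (nhdsWithin_le_nhds :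
          𝓝[≠] (0:ℂ) ≤ 𝓝 0)).div_const (Real.sqrt (ρ - ρc))
        simpa using this
      refine squeeze_zero_norm' ?_ hg
      filter_upwards [self_mem_nhdsWithin] with η hη
      simpa [Real.norm_eq_abs] using hbound η hη
    · filter_upwards [self_mem_nhdsWithin] with η hη
      exact (hsol η hη).1
  have hItend : Tendsto (fun η : ℂ => I (μsol η)) (𝓝[≠] (0:ℂ)) (𝓝 ρc) := hI0.comp hμ0
  -- the key ratio limit
  have heq' : ∀ᶠ η in 𝓝[≠] (0:ℂ), ‖η‖ / |μsol η| = Real.sqrt (ρ - I (μsol η)) := by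
    filter_upwards [self_mem_nhdsWithin] with η hη
    obtain ⟨hneg, heq⟩ := hsol η hη
    have hμne : μsol η ≠ 0 := ne_of_lt hneg
    have h2 : (‖η‖ / |μsol η|) ^ 2 = ρ - I (μsol η) := by
      rw [div_pow, sq_abs]; linarith
    rw [← h2, Real.sqrt_sq (by positivity)]
  have hkey : Tendsto (fun η : ℂ => ‖η‖ / |μsol η|) (𝓝[≠] (0:ℂ))
      (𝓝 (Real.sqrt (ρ - ρc))) := by
    have h1 : Tendsto (fun η : ℂ => Real.sqrt (ρ - I (μsol η))) (𝓝[≠] (0:ℂ))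
        (𝓝 (Real.sqrt (ρ - ρc))) :=
      (Real.continuous_sqrt.tendsto _).comp (tendsto_const_nhds.sub hItend)
    exact h1.congr' (Filter.EventuallyEq.symm heq')
  refine ⟨?_, hkey⟩
  -- first limit
  set e : ℂ := Complex.exp (Complex.I * (φ:ℂ)) with he
  have hene : e ≠ 0 := Complex.exp_ne_zero _
  have hnorme : ‖e‖ = 1 := by
    rw [he, mul_comm]
    exact Complex.norm_exp_ofReal_mul_I φ
  have hm : Tendsto (fun t : ℝ => (t : ℂ) * e) (𝓝[>] (0:ℝ)) (𝓝[≠] (0:ℂ)) := by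
    apply tendsto_nhdsWithin_of_tendsto_nhds_of_eventually_within
    · have : Tendsto (fun t : ℝ => (t : ℂ) * e) (𝓝 (0:ℝ)) (𝓝 ((0:ℂ) * e)) :=
        (Complex.continuous_ofReal.tendsto 0).mul tendsto_const_nhds
      simpa using this.mono_left nhdsWithin_le_nhds
    · filter_upwards [self_mem_nhdsWithin] with t ht
      have : (t:ℂ) ≠ 0 := by exact_mod_cast ne_of_gt ht
      exact mul_ne_zero this hene
  -- real ratio along the ray
  have hreal : Tendsto (fun t : ℝ => t / μsol ((t:ℂ) * e)) (𝓝[>] (0:ℝ))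
      (𝓝 (-Real.sqrt (ρ - ρc))) := by
    have h1 : Tendsto (fun t : ℝ => ‖(t:ℂ) * e‖ / |μsol ((t:ℂ) * e)|) (𝓝[>] (0:ℝ))
        (𝓝 (Real.sqrt (ρ - ρc))) := hkey.comp hm
    have h2 : ∀ᶠ t : ℝ in 𝓝[>] (0:ℝ),
        t / μsol ((t:ℂ) * e) = -(‖(t:ℂ) * e‖ / |μsol ((t:ℂ) * e)|) := by
      filter_upwards [self_mem_nhdsWithin] with t ht
      have htpos : (0:ℝ) < t := ht
      have htne : (t:ℂ) ≠ 0 := by exact_mod_cast ne_of_gt ht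
      have hneg := (hsol ((t:ℂ) * e) (mul_ne_zero htne hene)).1
      rw [norm_mul, hnorme, mul_one, Complex.norm_real, Real.norm_eq_abs,
        abs_of_pos htpos, abs_of_neg hneg]
      rw [div_neg, neg_neg]
    exact h1.neg.congr' (Filter.EventuallyEq.symm h2)
  -- conclude
  have hC : Tendsto (fun t : ℝ => ((t / μsol ((t:ℂ) * e) : ℝ) : ℂ) * e) (𝓝[>] (0:ℝ))
      (𝓝 (((-Real.sqrt (ρ - ρc) : ℝ) : ℂ) * e)) :=
    ((Complex.continuous_ofReal.tendsto _).comp hreal).mul tendsto_const_nhds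
  have hfin : ∀ᶠ t : ℝ in 𝓝[>] (0:ℝ),
      ((t / μsol ((t:ℂ) * e) : ℝ) : ℂ) * e
        = ((t : ℂ) * e) / ((μsol ((t:ℂ) * e) : ℝ) : ℂ) := by
    filter_upwards with t
    push_cast
    rw [div_mul_eq_mul_div]
  have := hC.congr' hfin
  convert this using 2
  push_cast
  ring
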